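/- If L is quasi-commutative, then for every ideal I of the reticulation D we have I = (I_*)^*; consequently the maps p ↦ p^* and P ↦ P_* are mutually inverse order isomorphisms between the poset of prime elements of L and the poset of prime ideals of D. -/

import Mathlib

/-- The December 2024 Mathlib definition of a compact element of a complete lattice
(restored: the name is gone and its successor `IsCompactElement` uses another definition). -/
def CompleteLattice.IsCompactElement {α : Type*} [CompleteLattice α] (k : α) :=
  ∀ s : Set α, k ≤ sSup s → ∃ t : Finset α, ↑t ⊆ s ∧ k ≤ t.sup id

/-- `p` is a prime element with respect to the commutator `com`. -/
def ComPrime {L : Type*} [CompleteLattice L] (com : L → L → L) (p : L) : Prop :=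
  p ≠ ⊤ ∧ ∀ a b : L, com a b ≤ p → a ≤ p ∨ b ≤ p

/-- The radical of `a`: the infimum of all primes above `a`. -/
def comRho {L : Type*} [CompleteLattice L] (com : L → L → L) (a : L) : L :=
  sInf {p | ComPrime com p ∧ a ≤ p}

/-- `C`: the closure of the set of compact elements under binary joins and commutators. -/
inductive InC {L : Type*} [CompleteLattice L] (com : L → L → L) : L → Prop
  | base (a : L) : CompleteLattice.IsCompactElement a → InC com a
  | join {a b : L} : InC com a → InC com b → InC com (a ⊔ b)
  | comm {a b : L} : InC com a → InC com b → InC com (com a b)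

/-- `θ^* = {λ(a) : a compact, a ≤ θ}` as a subset of the reticulation. -/
def upStar {L : Type*} [CompleteLattice L] {D : Type*} (lam : L → D) (θ : L) : Set D :=
  {d | ∃ a : L, CompleteLattice.IsCompactElement a ∧ a ≤ θ ∧ lam a = d}

/-- `I_* = ⨆{a compact : λ(a) ∈ I}`. -/
def downStar {L : Type*} [CompleteLattice L] {D : Type*} (lam : L → D) (I : Set D) : L :=
  sSup {a : L | CompleteLattice.IsCompactElement a ∧ lam a ∈ I}

theorem quasiCommutative_reticulation_spectra_iso {L : Type*} [CompleteLattice L]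
    (com : L → L → L)
    (hcomm : ∀ a b : L, com a b = com b a)
    (hmono : ∀ a b c : L, a ≤ b → com a c ≤ com b c)
    (hle : ∀ a b : L, com a b ≤ a ⊓ b)
    (hdist : ∀ (s : Set L) (b : L), com (sSup s) b = ⨆ x ∈ s, com x b)
    (htop : ∀ a : L, com ⊤ a = a)
    (hex : ∀ a : L, a ≠ ⊤ → ∃ p, ComPrime com p ∧ a ≤ p)
    (hcg : ∀ a : L, a = sSup {k | CompleteLattice.IsCompactElement k ∧ k ≤ a})
    (htopc : CompleteLattice.IsCompactElement (⊤ : L))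
    {D : Type*} [DistribLattice D] [BoundedOrder D] (lam : L → D)
    (hlamle : ∀ a b : L, InC com a → InC com b →
      (lam a ≤ lam b ↔ comRho com a ≤ comRho com b))
    (hlamsup : ∀ a b : L, InC com a → InC com b → lam (a ⊔ b) = lam a ⊔ lam b)
    (hlaminf : ∀ a b : L, InC com a → InC com b → lam (com a b) = lam a ⊓ lam b)
    (hlambot : lam ⊥ = ⊥) (hlamtop : ∀ a : L, InC com a → (lam a = ⊤ ↔ a = ⊤))
    (hlamsurj : ∀ d : D, ∃ a : L, InC com a ∧ lam a = d)
    (hqc : ∀ a b : L, CompleteLattice.IsCompactElement a → CompleteLattice.IsCompactElement b →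
      ∃ c : L, CompleteLattice.IsCompactElement c ∧ c ≤ com a b ∧
        comRho com c = comRho com (com a b)) :
    (∀ I : Order.Ideal D, upStar lam (downStar lam (I : Set D)) = (I : Set D)) ∧
    (∀ p : L, ComPrime com p → downStar lam (upStar lam p) = p) ∧
    (∀ p : L, ComPrime com p → ∃ I : Order.Ideal D, I.IsPrime ∧ (I : Set D) = upStar lam p) ∧
    (∀ P : Order.Ideal D, P.IsPrime → ComPrime com (downStar lam (P : Set D))) ∧
    (∀ P : Order.Ideal D, P.IsPrime → upStar lam (downStar lam (P : Set D)) = (P : Set D)) ∧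
    (∀ p q : L, ComPrime com p → ComPrime com q → (p ≤ q ↔ upStar lam p ⊆ upStar lam q)) := by
    classical
  -- basic facts about comRho
  have le_rho : ∀ a : L, a ≤ comRho com a := fun a =>
    le_sInf fun p hp => hp.2
  have rho_le_of_prime : ∀ a p : L, ComPrime com p → a ≤ p → comRho com a ≤ p :=
    fun a p hp hap => sInf_le ⟨hp, hap⟩
  have rho_mono : ∀ a b : L, a ≤ b → comRho com a ≤ comRho com b := by
    intro a b hab
    exact le_sInf fun p hp => sInf_le ⟨hp.1, le_trans hab hp.2⟩
  -- the prime sets above a are determined by comRho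
  have primeset_eq : ∀ a b : L, comRho com a = comRho com b →
      {p | ComPrime com p ∧ a ≤ p} = {p | ComPrime com p ∧ b ≤ p} := by
    intro a b h
    ext p
    constructor
    · rintro ⟨hp, hap⟩
      exact ⟨hp, le_trans (le_rho b) (h ▸ rho_le_of_prime a p hp hap)⟩
    · rintro ⟨hp, hbp⟩
      exact ⟨hp, le_trans (le_rho a) (h ▸ rho_le_of_prime b p hp hbp)⟩
  -- prime set of a sup
  have primeset_sup : ∀ a b : L, {p | ComPrime com p ∧ a ⊔ b ≤ p}
      = {p | ComPrime com p ∧ a ≤ p} ∩ {p | ComPrime com p ∧ b ≤ p} := by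
    intro a b
    ext p
    constructor
    · rintro ⟨hp, h⟩
      exact ⟨⟨hp, le_trans le_sup_left h⟩, ⟨hp, le_trans le_sup_right h⟩⟩
    · rintro ⟨⟨hp, h1⟩, ⟨_, h2⟩⟩
      exact ⟨hp, sup_le h1 h2⟩
  -- prime set of a commutator
  have primeset_com : ∀ a b : L, {p | ComPrime com p ∧ com a b ≤ p}
      = {p | ComPrime com p ∧ a ≤ p} ∪ {p | ComPrime com p ∧ b ≤ p} := by
    intro a b
    ext p
    constructor
    · rintro ⟨hp, h⟩
      rcases hp.2 a b h with h' | h'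
      · exact Or.inl ⟨hp, h'⟩
      · exact Or.inr ⟨hp, h'⟩
    · rintro (⟨hp, h⟩ | ⟨hp, h⟩)
      · exact ⟨hp, le_trans (le_trans (hle a b) inf_le_left) h⟩
      · exact ⟨hp, le_trans (le_trans (hle a b) inf_le_right) h⟩
  -- sup of compacts is compact
  have hsupc : ∀ a b : L, CompleteLattice.IsCompactElement a →
      CompleteLattice.IsCompactElement b → CompleteLattice.IsCompactElement (a ⊔ b) := by
    intro a b ha hb s hs
    obtain ⟨t1, ht1, ha'⟩ := ha s (le_trans le_sup_left hs)
    obtain ⟨t2, ht2, hb'⟩ := hb s (le_trans le_sup_right hs)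
    refine ⟨t1 ∪ t2, ?_, ?_⟩
    · push_cast
      exact Set.union_subset ht1 ht2
    · exact sup_le (ha'.trans (Finset.sup_mono Finset.subset_union_left))
        (hb'.trans (Finset.sup_mono Finset.subset_union_right))
  -- every element of C has a compact representative with the same radical
  have exrep : ∀ a : L, InC com a → ∃ c : L, CompleteLattice.IsCompactElement c ∧
      c ≤ a ∧ comRho com c = comRho com a := by
    intro a hIn
    induction hIn with
    | base a ha => exact ⟨a, ha, le_rfl, rfl⟩
    | join ha hb iha ihb =>
      obtain ⟨c, hc, hca, hcr⟩ := iha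
      obtain ⟨d, hd, hdb, hdr⟩ := ihb
      refine ⟨c ⊔ d, hsupc c d hc hd, sup_le_sup hca hdb, ?_⟩
      unfold comRho
      rw [primeset_sup, primeset_sup, primeset_eq _ _ hcr, primeset_eq _ _ hdr]
    | comm ha hb iha ihb =>
      rename_i x y
      obtain ⟨c, hc, hca, hcr⟩ := iha
      obtain ⟨d, hd, hdb, hdr⟩ := ihb
      obtain ⟨e, he, hecd, her⟩ := hqc c d hc hd
      refine ⟨e, he, le_trans hecd ?_, ?_⟩
      · calc com c d ≤ com x d := hmono c x d hca
          _ = com d x := hcomm x d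
          _ ≤ com y x := hmono d y x hdb
          _ = com x y := hcomm y x
      · rw [her]
        unfold comRho
        rw [primeset_com, primeset_com, primeset_eq _ _ hcr, primeset_eq _ _ hdr]
  -- lam is monotone / respects radical equality on C
  have lam_mono : ∀ a b : L, InC com a → InC com b → a ≤ b → lam a ≤ lam b := by
    intro a b ha hb hab
    exact (hlamle a b ha hb).mpr (rho_mono a b hab)
  have lam_eq : ∀ a b : L, InC com a → InC com b → comRho com a = comRho com b →
      lam a = lam b := by
    intro a b ha hb h
    exact le_antisymm ((hlamle a b ha hb).mpr h.le) ((hlamle b a hb ha).mpr h.ge)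
  -- bot is compact
  have hbotc : CompleteLattice.IsCompactElement (⊥ : L) := by
    intro s _
    exact ⟨∅, by simp⟩
  -- the generating set of downStar of an ideal is nonempty and directed
  have Sdir : ∀ I : Order.Ideal D,
      ({a : L | CompleteLattice.IsCompactElement a ∧ lam a ∈ I} : Set L).Nonempty ∧
      DirectedOn (· ≤ ·) {a : L | CompleteLattice.IsCompactElement a ∧ lam a ∈ I} := by
    intro I
    constructor
    · refine ⟨⊥, hbotc, ?_⟩
      obtain ⟨x, hx⟩ := I.nonempty
      rw [hlambot]
      exact I.lower bot_le hx
    · rintro x ⟨hxc, hxI⟩ y ⟨hyc, hyI⟩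
      refine ⟨x ⊔ y, ⟨hsupc x y hxc hyc, ?_⟩, le_sup_left, le_sup_right⟩
      rw [hlamsup x y (InC.base x hxc) (InC.base y hyc)]
      exact Order.Ideal.sup_mem hxI hyI
  -- a compact element below downStar of an ideal has lam in the ideal
  have compact_le_downStar : ∀ (I : Order.Ideal D) (k : L),
      CompleteLattice.IsCompactElement k → k ≤ downStar lam (I : Set D) → lam k ∈ I := by
    intro I k hk hkle
    obtain ⟨hne, hdir⟩ := Sdir I
    obtain ⟨x, ⟨hxc, hxI⟩, hkx⟩ :=
      (CompleteLattice.isCompactElement_iff_le_of_directed_sSup_le L k).mp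
          ((CompleteLattice.isCompactElement_iff_exists_le_sSup_of_le_sSup L k).mpr hk)
          _ hne hdir hkle
    exact I.lower (lam_mono k x (InC.base k hk) (InC.base x hxc) hkx) hxI
  -- Part 1 : upStar (downStar I) = I for any ideal I
  have part1 : ∀ I : Order.Ideal D, upStar lam (downStar lam (I : Set D)) = (I : Set D) := by
    intro I
    ext d
    constructor
    · rintro ⟨a, hac, hale, rfl⟩
      exact compact_le_downStar I a hac hale
    · intro hd
      obtain ⟨a, haC, rfl⟩ := hlamsurj d
      obtain ⟨c, hcc, hca, hcr⟩ := exrep a haC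
      have hlc : lam c = lam a := lam_eq c a (InC.base c hcc) haC hcr
      exact ⟨c, hcc, le_sSup ⟨hcc, hlc ▸ hd⟩, hlc⟩
  -- Part 2 : downStar (upStar p) = p for prime p
  have part2 : ∀ p : L, ComPrime com p → downStar lam (upStar lam p) = p := by
    intro p hp
    apply le_antisymm
    · apply sSup_le
      rintro a ⟨hac, b, hbc, hbp, hlb⟩
      have : comRho com a ≤ comRho com b :=
        (hlamle a b (InC.base a hac) (InC.base b hbc)).mp hlb.ge
      exact le_trans (le_rho a) (le_trans this (rho_le_of_prime b p hp hbp))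
    · conv_lhs => rw [hcg p]
      apply sSup_le
      rintro k ⟨hkc, hkp⟩
      exact le_sSup ⟨hkc, k, hkc, hkp, rfl⟩
  -- membership of lam in upStar of a prime
  have mem_upStar_prime : ∀ (p a : L), ComPrime com p → InC com a →
      (lam a ∈ upStar lam p ↔ a ≤ comRho com a ⊓ p ∨ a ≤ p) := by
    intro p a hp ha
    constructor
    · rintro ⟨b, hbc, hbp, hlb⟩
      have : comRho com a ≤ comRho com b :=
        (hlamle a b ha (InC.base b hbc)).mp hlb.ge
      exact Or.inr (le_trans (le_rho a) (le_trans this (rho_le_of_prime b p hp hbp)))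
    · rintro (h | h)
      · obtain ⟨c, hcc, hca, hcr⟩ := exrep a ha
        exact ⟨c, hcc, le_trans hca (le_trans h inf_le_right),
          lam_eq c a (InC.base c hcc) ha hcr⟩
      · obtain ⟨c, hcc, hca, hcr⟩ := exrep a ha
        exact ⟨c, hcc, le_trans hca h, lam_eq c a (InC.base c hcc) ha hcr⟩
  -- Part 3 : upStar p is a prime ideal
  have part3 : ∀ p : L, ComPrime com p →
      ∃ I : Order.Ideal D, I.IsPrime ∧ (I : Set D) = upStar lam p := by
    intro p hp
    have hlower : ∀ d e : D, d ≤ e → e ∈ upStar lam p → d ∈ upStar lam p := by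
      rintro d e hde ⟨a, hac, hap, rfl⟩
      obtain ⟨b, hbC, rfl⟩ := hlamsurj d
      obtain ⟨c, hcc, hcb, hcr⟩ := exrep b hbC
      have hlc : lam c = lam b := lam_eq c b (InC.base c hcc) hbC hcr
      have hcle : comRho com c ≤ comRho com a :=
        (hlamle c a (InC.base c hcc) (InC.base a hac)).mp (hlc ▸ hde)
      exact ⟨c, hcc, le_trans (le_rho c) (le_trans hcle (rho_le_of_prime a p hp hap)), hlc⟩
    refine ⟨⟨⟨upStar lam p, fun {d e} hde he => hlower e d hde he⟩,
      ⟨⊥, ⊥, hbotc, bot_le, hlambot⟩, ?_⟩, ?_, rfl⟩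
    · rintro x ⟨a, hac, hap, rfl⟩ y ⟨b, hbc, hbp, rfl⟩
      exact ⟨lam a ⊔ lam b,
        ⟨a ⊔ b, hsupc a b hac hbc, sup_le hap hbp,
          hlamsup a b (InC.base a hac) (InC.base b hbc)⟩, le_sup_left, le_sup_right⟩
    · -- primeness
      set I : Order.Ideal D := ⟨⟨upStar lam p, fun {d e} hde he => hlower e d hde he⟩,
        ⟨⊥, ⊥, hbotc, bot_le, hlambot⟩,
        by
          rintro x ⟨a, hac, hap, rfl⟩ y ⟨b, hbc, hbp, rfl⟩
          exact ⟨lam a ⊔ lam b,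
            ⟨a ⊔ b, hsupc a b hac hbc, sup_le hap hbp,
              hlamsup a b (InC.base a hac) (InC.base b hbc)⟩, le_sup_left, le_sup_right⟩⟩
      have hproper : Order.Ideal.IsProper I := by
        apply Order.Ideal.isProper_of_notMem (p := (⊤ : D))
        rintro ⟨a, hac, hap, hla⟩
        exact hp.1 (le_antisymm le_top
          (((hlamtop a (InC.base a hac)).mp hla) ▸ hap))
      haveI := hproper
      apply Order.Ideal.IsPrime.of_mem_or_mem
      intro x y hmem
      obtain ⟨a, haC, rfl⟩ := hlamsurj x
      obtain ⟨b, hbC, rfl⟩ := hlamsurj y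
      obtain ⟨c, hcc, hca, hcr⟩ := exrep a haC
      obtain ⟨d, hdc, hdb, hdr⟩ := exrep b hbC
      have hlc : lam c = lam a := lam_eq c a (InC.base c hcc) haC hcr
      have hld : lam d = lam b := lam_eq d b (InC.base d hdc) hbC hdr
      have hcd : lam (com c d) = lam a ⊓ lam b := by
        rw [hlaminf c d (InC.base c hcc) (InC.base d hdc), hlc, hld]
      have hmem' : lam (com c d) ∈ upStar lam p := by
        rw [hcd]
        exact hmem
      obtain ⟨e, hec, hep, hle'⟩ := hmem'
      have hrcd : comRho com (com c d) ≤ comRho com e :=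
        (hlamle _ e (InC.comm (InC.base c hcc) (InC.base d hdc)) (InC.base e hec)).mp hle'.ge
      have hcomle : com c d ≤ p :=
        le_trans (le_rho (com c d)) (le_trans hrcd (rho_le_of_prime e p hp hep))
      rcases hp.2 c d hcomle with h | h
      · exact Or.inl ⟨c, hcc, h, hlc⟩
      · exact Or.inr ⟨d, hdc, h, hld⟩
  -- Part 4 : downStar of a prime ideal is a prime element
  have part4 : ∀ P : Order.Ideal D, P.IsPrime → ComPrime com (downStar lam (P : Set D)) := by
    intro P hP
    constructor
    · intro htopeq
      have : lam ⊤ ∈ P := compact_le_downStar P ⊤ htopc htopeq.ge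
      have hlt : lam (⊤ : L) = ⊤ := (hlamtop ⊤ (InC.base ⊤ htopc)).mpr rfl
      exact hP.toIsProper.top_notMem (hlt ▸ this)
    · intro a b hab
      by_contra hcon
      push_neg at hcon
      obtain ⟨hna, hnb⟩ := hcon
      -- find compacts below a, b not below downStar P
      have hxa : ∃ x : L, CompleteLattice.IsCompactElement x ∧ x ≤ a ∧
          ¬ x ≤ downStar lam (P : Set D) := by
        by_contra h
        push_neg at h
        apply hna
        conv_lhs => rw [hcg a]
        exact sSup_le fun k ⟨hkc, hka⟩ => h k hkc hka
      have hyb : ∃ y : L, CompleteLattice.IsCompactElement y ∧ y ≤ b ∧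
          ¬ y ≤ downStar lam (P : Set D) := by
        by_contra h
        push_neg at h
        apply hnb
        conv_lhs => rw [hcg b]
        exact sSup_le fun k ⟨hkc, hkb⟩ => h k hkc hkb
      obtain ⟨x, hxc, hxa', hxn⟩ := hxa
      obtain ⟨y, hyc, hyb', hyn⟩ := hyb
      obtain ⟨c, hcc, hcxy, hcr⟩ := hqc x y hxc hyc
      have hxyab : com x y ≤ com a b := by
        calc com x y ≤ com a y := hmono x a y hxa'
          _ = com y a := hcomm a y
          _ ≤ com b a := hmono y b a hyb'
          _ = com a b := hcomm b a
      have hcP : lam c ∈ P :=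
        compact_le_downStar P c hcc (le_trans hcxy (le_trans hxyab hab))
      have hlc : lam c = lam x ⊓ lam y := by
        rw [← hlaminf x y (InC.base x hxc) (InC.base y hyc)]
        exact lam_eq c (com x y) (InC.base c hcc)
          (InC.comm (InC.base x hxc) (InC.base y hyc)) hcr
      rcases hP.mem_or_mem (hlc ▸ hcP) with h | h
      · exact hxn (le_sSup ⟨hxc, h⟩)
      · exact hyn (le_sSup ⟨hyc, h⟩)
  -- Part 6 : order embedding
  have part6 : ∀ p q : L, ComPrime com p → ComPrime com q →
      (p ≤ q ↔ upStar lam p ⊆ upStar lam q) := by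
    intro p q hp hq
    constructor
    · rintro hpq d ⟨a, hac, hap, rfl⟩
      exact ⟨a, hac, le_trans hap hpq, rfl⟩
    · intro hsub
      conv_lhs => rw [hcg p]
      apply sSup_le
      rintro k ⟨hkc, hkp⟩
      have : lam k ∈ upStar lam q := hsub ⟨k, hkc, hkp, rfl⟩
      obtain ⟨b, hbc, hbq, hlb⟩ := this
      have hkr : comRho com k ≤ comRho com b :=
        (hlamle k b (InC.base k hkc) (InC.base b hbc)).mp hlb.ge
      exact le_trans (le_rho k) (le_trans hkr (rho_le_of_prime b q hq hbq))
  exact ⟨part1, part2, part3, part4, fun P _ => part1 P, part6⟩
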